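/- Let A = P₁ − R₁ + S₁ = P₂ − R₂ + S₂ be two convergent double weak splittings of type II of a symmetric nonsingular matrix A ∈ ℝ^{n×n}, with iteration matrices W̃₁ and W̃₂ respectively. If P₂P₁⁻¹ ≥ I and S₁P₁⁻¹ ≥ S₂P₁⁻¹, then ρ(W̃₁) ≤ ρ(W̃₂) < 1. -/

import Mathlib

open Matrix Filter Topology

/-- The spectral radius of a real square matrix: the maximum (supremum) of the
moduli of its complex eigenvalues. -/
noncomputable def specRad {n : Type*} [Fintype n] [DecidableEq n]
    (B : Matrix n n ℝ) : ℝ :=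
  sSup ((fun z : ℂ => ‖z‖) '' spectrum ℂ (B.map Complex.ofReal))

/-- Entrywise order on real matrices: `entryLE A B` means every entry of `A` is
at most the corresponding entry of `B`. -/
def entryLE {m n : Type*} (A B : Matrix m n ℝ) : Prop :=
  ∀ i j, A i j ≤ B i j

/-- `X` is the Moore–Penrose inverse of `A`. -/
def IsMoorePenrose {m n : Type*} [Fintype m] [Fintype n]
    (A : Matrix m n ℝ) (X : Matrix n m ℝ) : Prop :=
  A * X * A = A ∧ X * A * X = X ∧ (A * X)ᵀ = A * X ∧ (X * A)ᵀ = X * A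

/-- Iteration matrix of a double weak splitting of type II:
`W̃ = [[(RP⁻¹)ᵀ, −(SP⁻¹)ᵀ],[I, 0]]`. -/
noncomputable def itMatII {n : Type*} [Fintype n] [DecidableEq n]
    (P R S : Matrix n n ℝ) : Matrix (n ⊕ n) (n ⊕ n) ℝ :=
  Matrix.fromBlocks ((R * P⁻¹)ᵀ) (-((S * P⁻¹)ᵀ)) 1 0

/-- Iteration matrix of a double weak splitting of type I:
`Ŵ = [[P⁻¹R, −P⁻¹S],[I, 0]]`. -/
noncomputable def itMatI {n : Type*} [Fintype n] [DecidableEq n]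
    (P R S : Matrix n n ℝ) : Matrix (n ⊕ n) (n ⊕ n) ℝ :=
  Matrix.fromBlocks (P⁻¹ * R) (-(P⁻¹ * S)) 1 0


open scoped ENNReal NNReal

section Lemmas

attribute [local instance] Matrix.linftyOpNormedAddCommGroup Matrix.linftyOpNormedRing
  Matrix.linftyOpNormedAlgebra

variable {m : Type*} [Fintype m] [DecidableEq m]

instance : CompleteSpace (Matrix m m ℂ) :=
  (by infer_instance : CompleteSpace (m → m → ℂ))

lemma specRad_nonneg (B : Matrix m m ℝ) : 0 ≤ specRad B :=
  Real.sSup_nonneg (by rintro x ⟨μ, _, rfl⟩; exact norm_nonneg μ)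

lemma map_ofReal_pow (B : Matrix m m ℝ) (k : ℕ) :
    (B.map Complex.ofReal) ^ k = (B ^ k).map Complex.ofReal := by
  induction k with
  | zero => simp [Matrix.map_one]
  | succ k ih =>
    rw [pow_succ, pow_succ, ih]
    ext i j
    simp [Matrix.mul_apply]

lemma nnnorm_map_ofReal (X : Matrix m m ℝ) : ‖X.map Complex.ofReal‖₊ = ‖X‖₊ := by
  simp [Matrix.linfty_opNNNorm_def, Matrix.map_apply]


lemma spectrum_transpose (M : Matrix m m ℂ) : spectrum ℂ Mᵀ = spectrum ℂ M := by
  ext μ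
  simp only [spectrum.mem_iff, Algebra.algebraMap_eq_smul_one, Matrix.isUnit_iff_isUnit_det]
  have : (μ • (1 : Matrix m m ℂ) - Mᵀ).det = (μ • (1 : Matrix m m ℂ) - M).det := by
    rw [← Matrix.det_transpose (μ • (1 : Matrix m m ℂ) - M)]
    congr 1
    rw [Matrix.transpose_sub, Matrix.transpose_smul, Matrix.transpose_one]
  rw [this]

lemma map_ofReal_transpose (B : Matrix m m ℝ) :
    Bᵀ.map Complex.ofReal = (B.map Complex.ofReal)ᵀ := rfl

lemma specRad_transpose (B : Matrix m m ℝ) : specRad Bᵀ = specRad B := by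
  unfold specRad
  rw [map_ofReal_transpose, spectrum_transpose]

lemma specRad_attained [Nonempty m] (B : Matrix m m ℝ) :
    ∃ μ ∈ spectrum ℂ (B.map Complex.ofReal), ‖μ‖ = specRad B := by
  have hne : (spectrum ℂ (B.map Complex.ofReal)).Nonempty := spectrum.nonempty _
  have hc : IsCompact ((fun z : ℂ => ‖z‖) '' spectrum ℂ (B.map Complex.ofReal)) :=
    (spectrum.isCompact _).image continuous_norm
  have := hc.sSup_mem (hne.image _)
  obtain ⟨μ, hμ, h⟩ := this
  exact ⟨μ, hμ, h⟩

lemma norm_map_ofReal (X : Matrix m m ℝ) : ‖X.map Complex.ofReal‖ = ‖X‖ :=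
  congrArg NNReal.toReal (nnnorm_map_ofReal X)

lemma mulVec_entry_mono {B : Matrix m m ℝ} (hB : ∀ i j, 0 ≤ B i j) {u v : m → ℝ}
    (huv : ∀ i, u i ≤ v i) (i : m) : (B *ᵥ u) i ≤ (B *ᵥ v) i := by
  simp only [Matrix.mulVec, dotProduct]
  exact Finset.sum_le_sum fun j _ => mul_le_mul_of_nonneg_left (huv j) (hB i j)

lemma mulVec_entry_nonneg {B : Matrix m m ℝ} (hB : ∀ i j, 0 ≤ B i j) {u : m → ℝ}
    (hu : ∀ i, 0 ≤ u i) (i : m) : 0 ≤ (B *ᵥ u) i := by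
  simpa using mulVec_entry_mono hB (u := 0) (v := u) (fun i => hu i) i

lemma le_specRad_of_subeigen (B : Matrix m m ℝ) (hB : ∀ i j, 0 ≤ B i j)
    (lam : ℝ) (x : m → ℝ) (hx : ∀ i, 0 ≤ x i) (hx0 : x ≠ 0)
    (h : ∀ i, lam * x i ≤ (B *ᵥ x) i) : lam ≤ specRad B := by
  rcases le_or_gt lam 0 with hl | hl
  · exact hl.trans (specRad_nonneg B)
  have hpow : ∀ k : ℕ, ∀ i, lam ^ k * x i ≤ ((B ^ k) *ᵥ x) i := by
    intro k
    induction k with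
    | zero => intro i; simp [Matrix.one_mulVec]
    | succ k ih =>
      intro i
      have h1 : (B *ᵥ (fun j => lam ^ k * x j)) i ≤ (B *ᵥ (B ^ k *ᵥ x)) i :=
        mulVec_entry_mono hB ih i
      have h2 : (B *ᵥ (fun j => lam ^ k * x j)) i = lam ^ k * (B *ᵥ x) i := by
        have : (fun j => lam ^ k * x j) = (lam ^ k) • x := rfl
        rw [this, Matrix.mulVec_smul]
        rfl
      have h3 : lam ^ (k + 1) * x i ≤ lam ^ k * (B *ᵥ x) i := by
        have := mul_le_mul_of_nonneg_left (h i) (pow_nonneg hl.le k)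
        calc lam ^ (k + 1) * x i = lam ^ k * (lam * x i) := by ring
          _ ≤ lam ^ k * (B *ᵥ x) i := this
      have h4 : (B ^ (k + 1)) *ᵥ x = B *ᵥ (B ^ k *ᵥ x) := by
        rw [Matrix.mulVec_mulVec, ← pow_succ']
      rw [h4]
      exact h3.trans (h2 ▸ h1)
  obtain ⟨i₀, hi₀⟩ : ∃ i, 0 < x i := by
    by_contra hc
    push_neg at hc
    exact hx0 (funext fun i => le_antisymm (hc i) (hx i))
  set M := B.map Complex.ofReal with hM
  have hxn : 0 < ‖x‖ := norm_pos_iff.mpr hx0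
  have hkey : ∀ k : ℕ, lam ^ k * x i₀ ≤ ‖B ^ k‖ * ‖x‖ := by
    intro k
    calc lam ^ k * x i₀ ≤ (B ^ k *ᵥ x) i₀ := hpow k i₀
      _ ≤ ‖(B ^ k *ᵥ x) i₀‖ := le_abs_self _
      _ ≤ ‖B ^ k *ᵥ x‖ := norm_le_pi_norm _ i₀
      _ ≤ ‖B ^ k‖ * ‖x‖ := Matrix.linfty_opNorm_mulVec _ _
  set c : ℝ := x i₀ / ‖x‖ with hc
  have hc0 : 0 < c := div_pos hi₀ hxn
  have hkey2 : ∀ k : ℕ, c * lam ^ k ≤ ‖M ^ k‖ := by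
    intro k
    rw [hM, map_ofReal_pow, norm_map_ofReal, hc, div_mul_eq_mul_div, div_le_iff₀ hxn]
    nlinarith [hkey k]
  have hG := spectrum.pow_nnnorm_pow_one_div_tendsto_nhds_spectralRadius M
  have hlow : ∀ k : ℕ, ENNReal.ofReal ((c * lam ^ k) ^ (1 / (k : ℝ)))
      ≤ (‖M ^ k‖₊ : ℝ≥0∞) ^ (1 / (k : ℝ)) := by
    intro k
    rw [← enorm_eq_nnnorm, ← ofReal_norm, ← ENNReal.ofReal_rpow_of_nonneg (by positivity) (by positivity)]
    exact ENNReal.rpow_le_rpow (ENNReal.ofReal_le_ofReal (hkey2 k)) (by positivity)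
  have hreal : Filter.Tendsto (fun k : ℕ => (c * lam ^ k) ^ (1 / (k : ℝ))) atTop (𝓝 lam) := by
    have he : ∀ᶠ k : ℕ in atTop, c ^ (1 / (k : ℝ)) * lam = (c * lam ^ k) ^ (1 / (k : ℝ)) := by
      filter_upwards [Filter.eventually_ge_atTop 1] with k hk
      have hk0 : (k : ℝ) ≠ 0 := Nat.cast_ne_zero.mpr (by omega)
      rw [Real.mul_rpow hc0.le (pow_nonneg hl.le k), ← Real.rpow_natCast lam k,
        ← Real.rpow_mul hl.le]
      rw [mul_one_div_cancel hk0, Real.rpow_one]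
    have h1 : Filter.Tendsto (fun k : ℕ => c ^ (1 / (k : ℝ))) atTop (𝓝 1) := by
      have h2 : Filter.Tendsto (fun k : ℕ => (1 / (k : ℝ))) atTop (𝓝 0) :=
        tendsto_one_div_atTop_nhds_zero_nat
      have h3 : ContinuousAt (fun y : ℝ => c ^ y) 0 := Real.continuousAt_const_rpow hc0.ne'
      have h4 := h3.tendsto.comp h2
      simpa [Function.comp_def, Real.rpow_zero] using h4
    have h5 : Filter.Tendsto (fun k : ℕ => c ^ (1 / (k : ℝ)) * lam) atTop (𝓝 (1 * lam)) :=
      h1.mul (tendsto_const_nhds (x := lam))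
    rw [one_mul] at h5
    exact h5.congr' he
  have hlowT : Filter.Tendsto (fun k : ℕ => ENNReal.ofReal ((c * lam ^ k) ^ (1 / (k : ℝ))))
      atTop (𝓝 (ENNReal.ofReal lam)) :=
    (ENNReal.continuous_ofReal.tendsto lam).comp hreal
  have hmain : ENNReal.ofReal lam ≤ spectralRadius ℂ M :=
    le_of_tendsto_of_tendsto hlowT hG (Filter.Eventually.of_forall hlow)
  have hub : spectralRadius ℂ M ≤ ENNReal.ofReal (specRad B) := by
    rw [spectralRadius]
    refine iSup₂_le fun μ hμ => ?_
    rw [← enorm_eq_nnnorm, ← ofReal_norm]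
    apply ENNReal.ofReal_le_ofReal
    exact le_csSup ((spectrum.isCompact _).image continuous_norm).bddAbove ⟨μ, hμ, rfl⟩
  exact (ENNReal.ofReal_le_ofReal_iff (specRad_nonneg B)).mp (hmain.trans hub)


lemma exists_subeigen [Nonempty m] (B : Matrix m m ℝ) (hB : ∀ i j, 0 ≤ B i j) :
    ∃ x : m → ℝ, (∀ i, 0 ≤ x i) ∧ x ≠ 0 ∧ ∀ i, specRad B * x i ≤ (B *ᵥ x) i := by
  obtain ⟨μ, hμ, habs⟩ := specRad_attained B
  set M := B.map Complex.ofReal with hM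
  have hdet : (μ • (1 : Matrix m m ℂ) - M).det = 0 := by
    rw [spectrum.mem_iff, Algebra.algebraMap_eq_smul_one, Matrix.isUnit_iff_isUnit_det] at hμ
    exact not_not.mp fun hne => hμ (isUnit_iff_ne_zero.mpr hne)
  obtain ⟨z, hz0, hz⟩ := (Matrix.exists_mulVec_eq_zero_iff).mpr hdet
  have hzeig : M *ᵥ z = μ • z := by
    rw [Matrix.sub_mulVec, sub_eq_zero] at hz
    rw [← hz, Matrix.smul_mulVec, Matrix.one_mulVec]
  refine ⟨fun i => ‖z i‖, fun i => norm_nonneg _, ?_, ?_⟩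
  · intro hcon
    apply hz0
    funext i
    have h0 := congrFun hcon i
    simpa using h0
  · intro i
    have h1 : ‖(M *ᵥ z) i‖ = specRad B * ‖z i‖ := by
      rw [hzeig, Pi.smul_apply, smul_eq_mul, norm_mul, habs]
    have h2 : (M *ᵥ z) i = ∑ j, (B i j : ℂ) * z j := by
      simp [Matrix.mulVec, dotProduct, hM, Matrix.map_apply]
    calc specRad B * ‖z i‖ = ‖(M *ᵥ z) i‖ := h1.symm
      _ = ‖∑ j, (B i j : ℂ) * z j‖ := by rw [h2]
      _ ≤ ∑ j, ‖(B i j : ℂ) * z j‖ := norm_sum_le _ _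
      _ = ∑ j, B i j * ‖z j‖ := by
          refine Finset.sum_congr rfl fun j _ => ?_
          rw [norm_mul, Complex.norm_real, Real.norm_eq_abs, abs_of_nonneg (hB i j)]
      _ = (B *ᵥ fun j => ‖z j‖) i := by
          simp [Matrix.mulVec, dotProduct]


lemma mulVec_le_mulVec_left {B C : Matrix m m ℝ} (hBC : ∀ i j, B i j ≤ C i j)
    {u : m → ℝ} (hu : ∀ i, 0 ≤ u i) (i : m) : (B *ᵥ u) i ≤ (C *ᵥ u) i := by
  simp only [Matrix.mulVec, dotProduct]
  exact Finset.sum_le_sum fun j _ => mul_le_mul_of_nonneg_right (hBC i j) (hu j)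

lemma specRad_isEmpty [IsEmpty m] (B : Matrix m m ℝ) : specRad B = 0 := by
  have hs : spectrum ℂ (B.map Complex.ofReal) = ∅ := by
    ext μ
    simp only [spectrum.mem_iff, Set.mem_empty_iff_false, iff_false, not_not]
    have : Subsingleton (Matrix m m ℂ) := ⟨fun a b => by ext i j; exact (IsEmpty.false i).elim⟩
    exact isUnit_of_subsingleton _
  rw [specRad, hs, Set.image_empty, Real.sSup_empty]

end Lemmas

theorem stmt11 {n : ℕ} (A P₁ R₁ S₁ P₂ R₂ S₂ : Matrix (Fin n) (Fin n) ℝ)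
    (hAsym : Aᵀ = A) (hAinv : IsUnit A.det)
    -- two double weak splittings of type II
    (hsplit₁ : A = P₁ - R₁ + S₁) (hPinv₁ : IsUnit P₁.det)
    (hRP₁ : entryLE 0 (R₁ * P₁⁻¹)) (hSP₁ : entryLE 0 (-(S₁ * P₁⁻¹)))
    (hsplit₂ : A = P₂ - R₂ + S₂) (hPinv₂ : IsUnit P₂.det)
    (hRP₂ : entryLE 0 (R₂ * P₂⁻¹)) (hSP₂ : entryLE 0 (-(S₂ * P₂⁻¹)))
    -- both splittings are convergent
    (hconv₁ : specRad (itMatII P₁ R₁ S₁) < 1)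
    (hconv₂ : specRad (itMatII P₂ R₂ S₂) < 1)
    -- `P₂P₁⁻¹ ≥ I` and `S₁P₁⁻¹ ≥ S₂P₁⁻¹`
    (hP : entryLE 1 (P₂ * P₁⁻¹)) (hS : entryLE (S₂ * P₁⁻¹) (S₁ * P₁⁻¹)) :
    specRad (itMatII P₁ R₁ S₁) ≤ specRad (itMatII P₂ R₂ S₂) ∧
      specRad (itMatII P₂ R₂ S₂) < 1 := by
  refine ⟨?_, hconv₂⟩
  set lam := specRad (itMatII P₁ R₁ S₁) with hlam
  rcases le_or_gt lam 0 with h0 | h0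
  · exact h0.trans (specRad_nonneg _)
  have hlt1 : lam < 1 := hconv₁
  have hne : Nonempty (Fin n ⊕ Fin n) := by
    by_contra hc
    rw [not_nonempty_iff] at hc
    rw [hlam, specRad_isEmpty] at h0
    exact lt_irrefl 0 h0
  have hP₁ : P₁ * P₁⁻¹ = 1 := Matrix.mul_nonsing_inv _ hPinv₁
  have hP₂ : P₂ * P₂⁻¹ = 1 := Matrix.mul_nonsing_inv _ hPinv₂
  have hP₂' : P₂⁻¹ * P₂ = 1 := Matrix.nonsing_inv_mul _ hPinv₂
  -- the transposed iteration matrices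
  set T₁ : Matrix (Fin n ⊕ Fin n) (Fin n ⊕ Fin n) ℝ :=
    Matrix.fromBlocks (R₁ * P₁⁻¹) 1 (-(S₁ * P₁⁻¹)) 0 with hT₁
  set T₂ : Matrix (Fin n ⊕ Fin n) (Fin n ⊕ Fin n) ℝ :=
    Matrix.fromBlocks (R₂ * P₂⁻¹) 1 (-(S₂ * P₂⁻¹)) 0 with hT₂
  have hT₁tr : (itMatII P₁ R₁ S₁)ᵀ = T₁ := by
    rw [itMatII, Matrix.fromBlocks_transpose, hT₁]
    congr 1 <;> simp
  have hT₂tr : (itMatII P₂ R₂ S₂)ᵀ = T₂ := by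
    rw [itMatII, Matrix.fromBlocks_transpose, hT₂]
    congr 1 <;> simp
  have hT₁nn : ∀ i j, 0 ≤ T₁ i j := by
    rintro (i | i) (j | j)
    · simpa [hT₁] using hRP₁ i j
    · by_cases h : i = j <;> simp [hT₁, Matrix.one_apply, h]
    · have h := hSP₁ i j
      simp only [hT₁, Matrix.fromBlocks_apply₂₁]
      simpa using h
    · simp [hT₁]
  have hT₂nn : ∀ i j, 0 ≤ T₂ i j := by
    rintro (i | i) (j | j)
    · simpa [hT₂] using hRP₂ i j
    · by_cases h : i = j <;> simp [hT₂, Matrix.one_apply, h]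
    · have h := hSP₂ i j
      simp only [hT₂, Matrix.fromBlocks_apply₂₁]
      simpa using h
    · simp [hT₂]
  -- subeigenvector of T₁
  obtain ⟨x, hx, hx0, hsub⟩ := exists_subeigen T₁ hT₁nn
  have hspecT₁ : specRad T₁ = lam := by rw [← hT₁tr, specRad_transpose]
  rw [hspecT₁] at hsub
  set u : Fin n → ℝ := fun i => x (Sum.inl i) with hu
  set w : Fin n → ℝ := fun i => x (Sum.inr i) with hw
  have hxelim : x = Sum.elim u w := by funext i; cases i <;> rfl
  have hblock : T₁ *ᵥ x = Sum.elim ((R₁ * P₁⁻¹) *ᵥ u + w) ((-(S₁ * P₁⁻¹)) *ᵥ u) := by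
    rw [hxelim, hT₁, Matrix.fromBlocks_mulVec]
    simp [Matrix.one_mulVec, Matrix.zero_mulVec]
  have hA1 : ∀ i, lam * u i ≤ ((R₁ * P₁⁻¹) *ᵥ u) i + w i := by
    intro i
    have h := hsub (Sum.inl i)
    rw [hblock] at h
    simpa using h
  have hB1 : ∀ i, lam * w i ≤ -(((S₁ * P₁⁻¹)) *ᵥ u) i := by
    intro i
    have h := hsub (Sum.inr i)
    rw [hblock] at h
    simpa [Matrix.neg_mulVec] using h
  have hunn : ∀ i, 0 ≤ u i := fun i => hx (Sum.inl i)
  have hwnn : ∀ i, 0 ≤ w i := fun i => hx (Sum.inr i)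
  have hu0 : u ≠ 0 := by
    intro hzero
    apply hx0
    have hwz : w = 0 := by
      funext i
      have h := hB1 i
      rw [hzero, Matrix.mulVec_zero] at h
      simp only [Pi.zero_apply, neg_zero] at h
      have : w i ≤ 0 := by nlinarith
      exact le_antisymm this (hwnn i)
    rw [hxelim, hzero, hwz]
    funext i
    cases i <;> rfl
  -- the comparison vector
  set u' : Fin n → ℝ := (P₂ * P₁⁻¹) *ᵥ u with hu'
  set y₂ : Fin n → ℝ := fun i => lam⁻¹ * ((-(S₂ * P₂⁻¹)) *ᵥ u') i with hy₂
  set y : (Fin n ⊕ Fin n) → ℝ := Sum.elim u' y₂ with hy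
  have huu' : ∀ i, u i ≤ u' i := by
    intro i
    have h := mulVec_le_mulVec_left (B := (1 : Matrix (Fin n) (Fin n) ℝ))
      (C := P₂ * P₁⁻¹) hP hunn i
    rwa [Matrix.one_mulVec] at h
  have hu'nn : ∀ i, 0 ≤ u' i := fun i => le_trans (hunn i) (huu' i)
  have hy₂nn : ∀ i, 0 ≤ y₂ i := by
    intro i
    have h := mulVec_entry_nonneg (B := -(S₂ * P₂⁻¹)) (fun i j => by simpa using hSP₂ i j)
      hu'nn i
    exact mul_nonneg (inv_nonneg.mpr h0.le) h
  have hynn : ∀ i, 0 ≤ y i := by rintro (i | i); exacts [hu'nn i, hy₂nn i]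
  have hy0 : y ≠ 0 := by
    obtain ⟨i, hi⟩ : ∃ i, 0 < u i := by
      by_contra hcon
      push_neg at hcon
      exact hu0 (funext fun i => le_antisymm (hcon i) (hunn i))
    intro hzero
    have := congrFun hzero (Sum.inl i)
    simp only [hy, Sum.elim_inl, Pi.zero_apply] at this
    nlinarith [huu' i]
  -- matrix identities
  have hid3 : (S₂ * P₂⁻¹) *ᵥ u' = (S₂ * P₁⁻¹) *ᵥ u := by
    rw [hu', Matrix.mulVec_mulVec]
    congr 1
    rw [Matrix.mul_assoc S₂ P₂⁻¹ (P₂ * P₁⁻¹), ← Matrix.mul_assoc P₂⁻¹ P₂ P₁⁻¹, hP₂',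
      Matrix.one_mul]
  have hid4 : (A * P₂⁻¹) *ᵥ u' = (A * P₁⁻¹) *ᵥ u := by
    rw [hu', Matrix.mulVec_mulVec]
    congr 1
    rw [Matrix.mul_assoc A P₂⁻¹ (P₂ * P₁⁻¹), ← Matrix.mul_assoc P₂⁻¹ P₂ P₁⁻¹, hP₂',
      Matrix.one_mul]
  have hR1 : R₁ * P₁⁻¹ = 1 + S₁ * P₁⁻¹ - A * P₁⁻¹ := by
    have h : R₁ = P₁ + S₁ - A := by rw [hsplit₁]; abel
    rw [h, Matrix.sub_mul, Matrix.add_mul, hP₁]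
  have hR2 : R₂ * P₂⁻¹ = 1 + S₂ * P₂⁻¹ - A * P₂⁻¹ := by
    have h : R₂ = P₂ + S₂ - A := by rw [hsplit₂]; abel
    rw [h, Matrix.sub_mul, Matrix.add_mul, hP₂]
  set a : Fin n → ℝ := (A * P₁⁻¹) *ᵥ u with ha
  set s1 : Fin n → ℝ := (S₁ * P₁⁻¹) *ᵥ u with hs1
  set s2 : Fin n → ℝ := (S₂ * P₁⁻¹) *ᵥ u with hs2
  have hs12 : ∀ i, s2 i ≤ s1 i := fun i => mulVec_le_mulVec_left hS hunn i
  have hR1v : (R₁ * P₁⁻¹) *ᵥ u = u + s1 - a := by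
    rw [hR1, Matrix.sub_mulVec, Matrix.add_mulVec, Matrix.one_mulVec]
  have hR2v : (R₂ * P₂⁻¹) *ᵥ u' = u' + s2 - a := by
    rw [hR2, Matrix.sub_mulVec, Matrix.add_mulVec, Matrix.one_mulVec, hid3, hid4]
  -- the key single-splitting inequality
  have hstar : ∀ i, lam * a i ≤ lam * (1 - lam) * u i - (1 - lam) * s1 i := by
    intro i
    have h1 := hA1 i
    rw [hR1v] at h1
    simp only [Pi.add_apply, Pi.sub_apply] at h1
    have h2 := hB1 i
    nlinarith [mul_le_mul_of_nonneg_left h1 h0.le]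
  -- T₂ acts on y
  have hblock2 : T₂ *ᵥ y = Sum.elim ((R₂ * P₂⁻¹) *ᵥ u' + y₂) ((-(S₂ * P₂⁻¹)) *ᵥ u') := by
    rw [hy, hT₂, Matrix.fromBlocks_mulVec]
    simp [Matrix.one_mulVec, Matrix.zero_mulVec]
  have hsuby : ∀ i, lam * y i ≤ (T₂ *ᵥ y) i := by
    rintro (i | i)
    · rw [hblock2]
      simp only [Sum.elim_inl, Pi.add_apply, hy]
      rw [hR2v]
      simp only [Pi.add_apply, Pi.sub_apply]
      have hy₂val : lam * y₂ i = -(s2 i) := by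
        rw [hy₂]
        simp only [Matrix.neg_mulVec, hid3, Pi.neg_apply]
        rw [← mul_assoc, mul_inv_cancel₀ h0.ne', one_mul]
      refine (mul_le_mul_iff_right₀ h0).mp ?_
      have hf1 : 0 ≤ lam * (1 - lam) * (u' i - u i) :=
        mul_nonneg (mul_nonneg h0.le (by linarith)) (by linarith [huu' i])
      have hf2 : 0 ≤ (1 - lam) * (s1 i - s2 i) :=
        mul_nonneg (by linarith) (by linarith [hs12 i])
      nlinarith [hstar i, hy₂val]
    · rw [hblock2]
      simp only [Sum.elim_inr, hy]
      rw [hy₂]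
      have heq : lam * (lam⁻¹ * ((-(S₂ * P₂⁻¹)) *ᵥ u') i) = ((-(S₂ * P₂⁻¹)) *ᵥ u') i := by
        rw [← mul_assoc, mul_inv_cancel₀ h0.ne', one_mul]
      rw [heq]
  have hfin := le_specRad_of_subeigen T₂ hT₂nn lam y hynn hy0 hsuby
  rwa [← hT₂tr, specRad_transpose] at hfin
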